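/- Let ř = D P on ℂ^n ⊗ ℂ^n with D = id − 2∑_{x>k} e_{x,x} ⊗ e_{x,x}, P the flip map. For x, y ∈ [n] define Δ(L_{x,y}) := e_{y,x} ⊗ d_x + d_y ⊗ e_{y,x} ∈ End(ℂ^n ⊗ ℂ^n), where d_z = id − 2e_{z,z} if z > k and d_z = id if z ≤ k. Then ř commutes with Δ(L_{x,y}) for all x, y ∈ [n]. -/

import Mathlib

open Matrix Kronecker BigOperators

noncomputable section

def E (n : ℕ) (x y : Fin n) : Matrix (Fin n) (Fin n) ℂ := Matrix.single x y 1

def Pmat (n : ℕ) : Matrix (Fin n × Fin n) (Fin n × Fin n) ℂ :=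
  ∑ x : Fin n, ∑ y : Fin n, E n x y ⊗ₖ E n y x

def Dmat (n k : ℕ) : Matrix (Fin n × Fin n) (Fin n × Fin n) ℂ :=
  1 - (2 : ℂ) • ∑ x ∈ Finset.univ.filter (fun x : Fin n => k ≤ (x : ℕ)), E n x x ⊗ₖ E n x x

/-- `d_z = id` if `z ≤ k` and `d_z = id − 2 e_{z,z}` if `z > k` (`0`-indexed: `z ≤ k`
means `(z : ℕ) < k`). -/
def dsmall (n k : ℕ) (z : Fin n) : Matrix (Fin n) (Fin n) ℂ :=
  if (z : ℕ) < k then 1 else 1 - (2 : ℂ) • E n z z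

/-- `Δ(L_{x,y}) = e_{y,x} ⊗ d_x + d_y ⊗ e_{y,x}`. -/
def DeltaL (n k : ℕ) (x y : Fin n) : Matrix (Fin n × Fin n) (Fin n × Fin n) ℂ :=
  E n y x ⊗ₖ dsmall n k x + dsmall n k y ⊗ₖ E n y x

lemma E_mul_E (n : ℕ) (a b c d : Fin n) :
    E n a b * E n c d = if b = c then E n a d else 0 := by
  by_cases h : b = c
  · subst h
    simp [E, Matrix.single_mul_single_same]
  · simp only [if_neg h, E]
    exact Matrix.single_mul_single_of_ne (h := h) ..

lemma Pmat_apply (n : ℕ) (a b c d : Fin n) :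
    Pmat n (a, b) (c, d) = if a = d ∧ b = c then 1 else 0 := by
  simp only [Pmat, Matrix.sum_apply, Matrix.kroneckerMap_apply, E, Matrix.single,
    Matrix.of_apply, ite_and]
  simp [Finset.sum_ite_eq, ite_and, and_comm, eq_comm]

lemma Pmat_mul_kron (n : ℕ) (A B : Matrix (Fin n) (Fin n) ℂ) :
    Pmat n * (A ⊗ₖ B) = (B ⊗ₖ A) * Pmat n := by
  ext ⟨a, b⟩ ⟨c, d⟩
  simp only [Matrix.mul_apply, Fintype.sum_prod_type, Pmat_apply, Matrix.kroneckerMap_apply,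
    ite_and]
  simp [Finset.sum_ite_eq, Finset.sum_ite_eq', mul_comm]

def Smat (n k : ℕ) : Matrix (Fin n × Fin n) (Fin n × Fin n) ℂ :=
  ∑ x ∈ Finset.univ.filter (fun x : Fin n => k ≤ (x : ℕ)), E n x x ⊗ₖ E n x x

lemma Dmat_eq (n k : ℕ) : Dmat n k = 1 - (2 : ℂ) • Smat n k := rfl

lemma Smat_mul_right (n k : ℕ) (A : Matrix (Fin n) (Fin n) ℂ) (x y : Fin n) :
    Smat n k * (A ⊗ₖ E n y x) =
      if k ≤ (y : ℕ) then (E n y y * A) ⊗ₖ E n y x else 0 := by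
  rw [Smat, Finset.sum_mul]
  have hz : ∀ z ∈ Finset.univ.filter (fun z : Fin n => k ≤ (z : ℕ)),
      (E n z z ⊗ₖ E n z z) * (A ⊗ₖ E n y x)
        = if z = y then (E n y y * A) ⊗ₖ E n y x else 0 := by
    intro z _
    rw [← Matrix.mul_kronecker_mul, E_mul_E]
    by_cases h : z = y
    · subst h; simp
    · simp [h]
  rw [Finset.sum_congr rfl hz, Finset.sum_ite_eq']
  simp [Finset.mem_filter]

lemma Smat_mul_left (n k : ℕ) (A : Matrix (Fin n) (Fin n) ℂ) (x y : Fin n) :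
    Smat n k * (E n y x ⊗ₖ A) =
      if k ≤ (y : ℕ) then E n y x ⊗ₖ (E n y y * A) else 0 := by
  rw [Smat, Finset.sum_mul]
  have hz : ∀ z ∈ Finset.univ.filter (fun z : Fin n => k ≤ (z : ℕ)),
      (E n z z ⊗ₖ E n z z) * (E n y x ⊗ₖ A)
        = if z = y then E n y x ⊗ₖ (E n y y * A) else 0 := by
    intro z _
    rw [← Matrix.mul_kronecker_mul, E_mul_E]
    by_cases h : z = y
    · subst h; simp
    · simp [h]
  rw [Finset.sum_congr rfl hz, Finset.sum_ite_eq']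
  simp [Finset.mem_filter]

lemma mul_Smat_right (n k : ℕ) (A : Matrix (Fin n) (Fin n) ℂ) (x y : Fin n) :
    (A ⊗ₖ E n y x) * Smat n k =
      if k ≤ (x : ℕ) then (A * E n x x) ⊗ₖ E n y x else 0 := by
  rw [Smat, Finset.mul_sum]
  have hz : ∀ z ∈ Finset.univ.filter (fun z : Fin n => k ≤ (z : ℕ)),
      (A ⊗ₖ E n y x) * (E n z z ⊗ₖ E n z z)
        = if z = x then (A * E n x x) ⊗ₖ E n y x else 0 := by
    intro z _
    rw [← Matrix.mul_kronecker_mul, E_mul_E]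
    by_cases h : z = x
    · subst h; simp
    · simp [h, Ne.symm h]
  rw [Finset.sum_congr rfl hz, Finset.sum_ite_eq']
  simp [Finset.mem_filter]

lemma mul_Smat_left (n k : ℕ) (A : Matrix (Fin n) (Fin n) ℂ) (x y : Fin n) :
    (E n y x ⊗ₖ A) * Smat n k =
      if k ≤ (x : ℕ) then E n y x ⊗ₖ (A * E n x x) else 0 := by
  rw [Smat, Finset.mul_sum]
  have hz : ∀ z ∈ Finset.univ.filter (fun z : Fin n => k ≤ (z : ℕ)),
      (E n y x ⊗ₖ A) * (E n z z ⊗ₖ E n z z)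
        = if z = x then E n y x ⊗ₖ (A * E n x x) else 0 := by
    intro z _
    rw [← Matrix.mul_kronecker_mul, E_mul_E]
    by_cases h : z = x
    · subst h; simp
    · simp [h, Ne.symm h]
  rw [Finset.sum_congr rfl hz, Finset.sum_ite_eq']
  simp [Finset.mem_filter]

lemma sub_kron (n : ℕ) (A B C : Matrix (Fin n) (Fin n) ℂ) :
    (A - B) ⊗ₖ C = A ⊗ₖ C - B ⊗ₖ C := by
  ext ⟨i, j⟩ ⟨a, b⟩
  simp [Matrix.kroneckerMap_apply, sub_mul]

lemma kron_sub (n : ℕ) (A B C : Matrix (Fin n) (Fin n) ℂ) :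
    A ⊗ₖ (B - C) = A ⊗ₖ B - A ⊗ₖ C := by
  ext ⟨i, j⟩ ⟨a, b⟩
  simp [Matrix.kroneckerMap_apply, mul_sub]

lemma key (n k : ℕ) (x y : Fin n) :
    Dmat n k * (dsmall n k x ⊗ₖ E n y x + E n y x ⊗ₖ dsmall n k y)
      = DeltaL n k x y * Dmat n k := by
  rw [DeltaL, Dmat_eq, sub_mul, mul_sub, one_mul, mul_one, smul_mul_assoc, mul_smul_comm,
    mul_add, add_mul, Smat_mul_right, Smat_mul_left, mul_Smat_left, mul_Smat_right]
  unfold dsmall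
  rcases lt_or_ge (x : ℕ) k with hx | hx <;> rcases lt_or_ge (y : ℕ) k with hy | hy
  · simp only [if_pos hx, if_pos hy, if_neg (not_le.mpr hx), if_neg (not_le.mpr hy),
      smul_zero, sub_zero]
    abel
  · have hxy : y ≠ x := fun h => absurd (h ▸ hy) (not_le.mpr hx)
    simp only [if_pos hx, if_neg (not_lt.mpr hy), if_neg (not_le.mpr hx), if_pos hy,
      Matrix.mul_sub, Matrix.sub_mul, Matrix.mul_one, Matrix.one_mul,
      mul_smul_comm, smul_mul_assoc, E_mul_E, if_pos rfl, eq_self_iff_true, if_true, if_neg hxy,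
      sub_kron, kron_sub, Matrix.smul_kronecker,
      Matrix.kronecker_smul, Matrix.zero_kronecker, Matrix.kronecker_zero,
      smul_zero, sub_zero, smul_sub, smul_smul]
    module
  · have hxy : x ≠ y := fun h => absurd (h ▸ hx) (not_le.mpr hy)
    simp only [if_neg (not_lt.mpr hx), if_pos hy, if_pos hx, if_neg (not_le.mpr hy),
      Matrix.mul_sub, Matrix.sub_mul, Matrix.mul_one, Matrix.one_mul,
      mul_smul_comm, smul_mul_assoc, E_mul_E, if_pos rfl, eq_self_iff_true, if_true, if_neg hxy, if_neg hxy.symm,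
      sub_kron, kron_sub, Matrix.smul_kronecker,
      Matrix.kronecker_smul, Matrix.zero_kronecker, Matrix.kronecker_zero,
      smul_zero, sub_zero, smul_sub, smul_smul]
    module
  · by_cases hxy : y = x
    · subst hxy
      simp only [if_neg (not_lt.mpr hx), if_pos hx,
        Matrix.mul_sub, Matrix.sub_mul, Matrix.mul_one, Matrix.one_mul,
        mul_smul_comm, smul_mul_assoc, E_mul_E, if_pos rfl, eq_self_iff_true, if_true,
        sub_kron, kron_sub, Matrix.smul_kronecker,
        Matrix.kronecker_smul, smul_sub, smul_smul]
      module
    · simp only [if_neg (not_lt.mpr hx), if_neg (not_lt.mpr hy), if_pos hx, if_pos hy,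
        Matrix.mul_sub, Matrix.sub_mul, Matrix.mul_one, Matrix.one_mul,
        mul_smul_comm, smul_mul_assoc, E_mul_E, if_pos rfl, eq_self_iff_true, if_true, if_neg hxy, if_neg (Ne.symm hxy),
        sub_kron, kron_sub, Matrix.smul_kronecker,
        Matrix.kronecker_smul, Matrix.zero_kronecker, Matrix.kronecker_zero,
        smul_zero, sub_zero, smul_sub, smul_smul]
      module

theorem stmt8 (n k m : ℕ) (hn : n = k + m) (x y : Fin n) :
    (Dmat n k * Pmat n) * DeltaL n k x y = DeltaL n k x y * (Dmat n k * Pmat n) := by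
  have h1 : Pmat n * DeltaL n k x y =
      (dsmall n k x ⊗ₖ E n y x + E n y x ⊗ₖ dsmall n k y) * Pmat n := by
    rw [DeltaL, mul_add, add_mul, Pmat_mul_kron, Pmat_mul_kron]
  rw [mul_assoc, h1, ← mul_assoc, key, mul_assoc]
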